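/- Let T > 0, η > 0, β > 0. Set T̄ = 1 + T², β̄ = (1 + β/2)⁻¹, J_ODE = -1 + T̄^{-1} - (1 - β̄·(T̄^{-1/2} - 1)/(T̄^{-(1+η²)/2} - 1))², and J_REF = -2 + T̄^{-(1+η²)}. Then the improvement of fine-tuning satisfies J_ODE - J_REF ≥ 1 - (1 - β̄)² - 1/(2T) - 1/T². -/

import Mathlib

private lemma ve_aux_A (b r : ℝ) (hr1 : r < 1) :
    ((1 - b * r) ^ 2 - (1 - b) ^ 2) * (1 + r) ≤ 1 - r := by
  nlinarith [mul_nonneg (by linarith : (0:ℝ) ≤ 1 - r) (sq_nonneg (1 - b * (1 + r)))]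

private lemma ve_aux_sb (T s : ℝ) (hT : 0 < T) (hs0 : 0 < s)
    (hs2' : s ^ 2 * (1 + T ^ 2) = 1) : s * (T ^ 2 + T + 2) ≤ T + 2 := by
  nlinarith [hs2', mul_pos hT (mul_pos hT hT),
    mul_pos hs0 (by positivity : (0:ℝ) < T ^ 2 + T + 2)]

private lemma ve_aux_poly (T s u : ℝ) (hT : 0 < T) (hu0 : 0 < u) (hus : u < s)
    (hsb : s * (T ^ 2 + T + 2) ≤ T + 2) :
    (s - u) * (2 * T ^ 2) ≤ (T + 2) * (2 - s - u) := by
  nlinarith [hsb, hu0.le, hus.le, mul_nonneg hu0.le (sq_nonneg T),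
    mul_nonneg hu0.le hT.le]


/-- Explicit non-asymptotic improvement lower bound for the VE model (Theorem 3.1). -/
theorem ve_improvement_bound (T η β : ℝ) (hT : 0 < T) (hη : 0 < η) (hβ : 0 < β) :
    let T' : ℝ := 1 + T ^ 2
    let β' : ℝ := (1 + β / 2)⁻¹
    let JODE : ℝ := -1 + T'⁻¹ -
      (1 - β' * (T' ^ (-(1 : ℝ) / 2) - 1) / (T' ^ (-(1 + η ^ 2) / 2) - 1)) ^ 2
    let JREF : ℝ := -2 + T' ^ (-(1 + η ^ 2))
    JODE - JREF ≥ 1 - (1 - β') ^ 2 - 1 / (2 * T) - 1 / T ^ 2 := by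
  intro T' β' JODE JREF
  have hT'1 : (1 : ℝ) < T' := by show (1:ℝ) < 1 + T ^ 2; nlinarith
  have hT'0 : (0 : ℝ) < T' := by linarith
  set s : ℝ := T' ^ (-(1 : ℝ) / 2) with hs
  set u : ℝ := T' ^ (-(1 + η ^ 2) / 2) with hu
  have hs0 : 0 < s := Real.rpow_pos_of_pos hT'0 _
  have hu0 : 0 < u := Real.rpow_pos_of_pos hT'0 _
  have hs1 : s < 1 := Real.rpow_lt_one_of_one_lt_of_neg hT'1 (by norm_num)
  have hus : u < s := by
    rw [hs, hu]
    apply Real.rpow_lt_rpow_left_iff hT'1 |>.2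
    nlinarith [pow_pos hη 2]
  have hu1 : u < 1 := lt_trans hus hs1
  have hs2 : s ^ 2 = T'⁻¹ := by
    rw [sq, ← Real.rpow_add hT'0,
      show (-(1:ℝ)/2 + -(1:ℝ)/2) = -1 by norm_num, Real.rpow_neg_one]
  have hu2 : u ^ 2 = T' ^ (-(1 + η ^ 2)) := by
    rw [sq, ← Real.rpow_add hT'0]
    congr 1; ring
  set r : ℝ := (1 - s) / (1 - u) with hr
  have h1u : (0:ℝ) < 1 - u := by linarith
  have hr0 : 0 ≤ r := div_nonneg (by linarith) (by linarith)
  have hr1 : r < 1 := (div_lt_one h1u).2 (by linarith)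
  have hq : (s - 1) / (u - 1) = r := by
    rw [hr, div_eq_div_iff (by linarith) (by linarith)]
    ring
  have h1pr : (0:ℝ) < 1 + r := by linarith
  have hA : ((1 - β' * r) ^ 2 - (1 - β') ^ 2) * (1 + r) ≤ 1 - r := ve_aux_A β' r hr1
  have hA' : (1 - β' * r) ^ 2 ≤ (1 - β') ^ 2 + (1 - r) / (1 + r) := by
    rw [← sub_le_iff_le_add', le_div_iff₀ h1pr]
    exact hA
  have hs2' : s ^ 2 * (1 + T ^ 2) = 1 := by
    rw [hs2]
    field_simp
    rfl
  have hsb : s * (T ^ 2 + T + 2) ≤ T + 2 := ve_aux_sb T s hT hs0 hs2'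
  have e1 : 1 - r = (s - u) / (1 - u) := by
    rw [hr]; field_simp; ring
  have e2 : 1 + r = (2 - s - u) / (1 - u) := by
    rw [hr]; field_simp; ring
  have h2su : (0:ℝ) < 2 - s - u := by linarith
  have hKe : 1 / (2 * T) + 1 / T ^ 2 = (T + 2) / (2 * T ^ 2) := by
    field_simp
  have e3 : (1 - r) / (1 + r) = (s - u) / (2 - s - u) := by
    rw [e1, e2]
    field_simp
  have hpoly : (s - u) * (2 * T ^ 2) ≤ (T + 2) * (2 - s - u) := ve_aux_poly T s u hT hu0 hus hsb
  have hC : (1 - r) / (1 + r) ≤ 1 / (2 * T) + 1 / T ^ 2 := by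
    rw [e3, hKe, div_le_div_iff₀ h2su (by positivity)]
    exact hpoly
  show -1 + T'⁻¹ - (1 - β' * (s - 1) / (u - 1)) ^ 2 - (-2 + T' ^ (-(1 + η ^ 2)))
      ≥ 1 - (1 - β') ^ 2 - 1 / (2 * T) - 1 / T ^ 2
  rw [mul_div_assoc, hq, ← hs2, ← hu2]
  have hsq : u ^ 2 ≤ s ^ 2 := pow_le_pow_left₀ hu0.le hus.le 2
  linarith [hA', hC, hsq]
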